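/- (Remark 1, ultimate tracking bound of Algorithm 1) Let (x_k) be generated by Algorithm 1 (prediction x⁻_{k+1} = x_k − δ·(|∇_t f(x_k,t_k)|/‖∇_x f(x_k,t_k)‖²)·∇_x f(x_k,t_k) if ‖∇_x f(x_k,t_k)‖ ≥ ε, else x⁻_{k+1} = x_k; update x_{k+1} = x⁻_{k+1} − α·∇_x f(x⁻_{k+1}, t_{k+1})) with 0 < α ≤ 1/(2M). Then limsup_{k→∞} (f(x_k,t_k) − f*(t_k)) ≤ ψ/(4κ²α²m) + max(γδ², μδ)/(4κ²α²m²); in particular the effect of the initialization error f(x_0,t_0) − f*(t_0) vanishes as k → ∞ since (1 − 2καm)^k → 0. -/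

import Mathlib

open RealInnerProductSpace Filter

/-- 1-D Taylor-type bound: if `φ' s ≤ φ' 0 + C s` on `[0,1]` then
`φ 1 ≤ φ 0 + φ' 0 + C/2`. -/
lemma taylor1d_aux (φ φ' : ℝ → ℝ) (hd : ∀ s : ℝ, HasDerivAt φ (φ' s) s)
    (C : ℝ) (hC : ∀ s ∈ Set.Icc (0:ℝ) 1, φ' s ≤ φ' 0 + C * s) :
    φ 1 ≤ φ 0 + φ' 0 + C / 2 := by
  set ψ : ℝ → ℝ := fun u => φ u - u * φ' 0 - C * u ^ 2 / 2 with hψdef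
  have hψ : ∀ s : ℝ, HasDerivAt ψ (φ' s - φ' 0 - C * s) s := by
    intro s
    have h1 : HasDerivAt (fun u : ℝ => u * φ' 0) (φ' 0) s := hasDerivAt_mul_const (φ' 0)
    have h2 : HasDerivAt (fun u : ℝ => C * u ^ 2 / 2) (C * s) s := by
      have : HasDerivAt (fun u : ℝ => C * u ^ 2 / 2) _ s := ((hasDerivAt_pow 2 s).const_mul C).div_const 2
      convert this using 1
      simp; ring
    exact ((hd s).sub h1).sub h2
  have hanti : AntitoneOn ψ (Set.Icc 0 1) := by
    apply antitoneOn_of_deriv_nonpos (convex_Icc 0 1)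
    · exact fun s _ => (hψ s).continuousAt.continuousWithinAt
    · exact fun s _ => (hψ s).differentiableAt.differentiableWithinAt
    · intro s hs
      rw [interior_Icc] at hs
      rw [(hψ s).deriv]
      have := hC s ⟨hs.1.le, hs.2.le⟩
      linarith
  have := hanti (Set.left_mem_Icc.2 zero_le_one) (Set.right_mem_Icc.2 zero_le_one) zero_le_one
  simp only [hψdef] at this
  norm_num at this
  linarith

/-- Descent lemma from Lipschitz-type gradient bound. -/
lemma quad_upper_aux {E : Type*} [NormedAddCommGroup E] [InnerProductSpace ℝ E] [CompleteSpace E]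
    (φ : E → ℝ) (g : E → E) (M : ℝ)
    (hg : ∀ z : E, HasGradientAt φ (g z) z)
    (hLip : ∀ a b : E, ‖g a - g b‖ ≤ M * ‖a - b‖) (y v : E) :
    φ (y + v) ≤ φ y + ⟪g y, v⟫ + M / 2 * ‖v‖ ^ 2 := by
  have hline : ∀ s : ℝ, HasDerivAt (fun u : ℝ => y + u • v) v s := by
    intro s
    simpa using ((hasDerivAt_id s).smul_const v).const_add y
  have hd : ∀ s : ℝ, HasDerivAt (fun u : ℝ => φ (y + u • v)) (⟪g (y + s • v), v⟫) s := by
    intro s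
    have := ((hg (y + s • v)).hasFDerivAt).comp_hasDerivAt s (hline s)
    simpa [InnerProductSpace.toDual_apply_apply, Function.comp_def] using this
  have key := taylor1d_aux (fun u => φ (y + u • v)) (fun s => ⟪g (y + s • v), v⟫) hd
      (M * ‖v‖ ^ 2) ?_
  · simp only [zero_smul, add_zero, one_smul] at key
    linarith
  · intro s hs
    simp only [zero_smul, add_zero]
    have h1 : ⟪g (y + s • v), v⟫ - ⟪g y, v⟫ = ⟪g (y + s • v) - g y, v⟫ := by
      rw [inner_sub_left]
    have h2 : ⟪g (y + s • v) - g y, v⟫ ≤ ‖g (y + s • v) - g y‖ * ‖v‖ := real_inner_le_norm _ _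
    have h3 : ‖g (y + s • v) - g y‖ ≤ M * (s * ‖v‖) := by
      have := hLip (y + s • v) y
      simpa [norm_smul, abs_of_nonneg hs.1] using this
    nlinarith [norm_nonneg v, norm_nonneg (g (y + s • v) - g y)]

/-- Strong-convexity lower bound. -/
lemma quad_lower_aux {E : Type*} [NormedAddCommGroup E] [InnerProductSpace ℝ E] [CompleteSpace E]
    (φ : E → ℝ) (g : E → E) (m : ℝ)
    (hg : ∀ z : E, HasGradientAt φ (g z) z)
    (hsc : ∀ a b : E, m * ‖a - b‖ ^ 2 ≤ ⟪g a - g b, a - b⟫) (y v : E) :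
    φ y + ⟪g y, v⟫ + m / 2 * ‖v‖ ^ 2 ≤ φ (y + v) := by
  have hline : ∀ s : ℝ, HasDerivAt (fun u : ℝ => y + u • v) v s := by
    intro s
    simpa using ((hasDerivAt_id s).smul_const v).const_add y
  have hd : ∀ s : ℝ, HasDerivAt (fun u : ℝ => -φ (y + u • v)) (-⟪g (y + s • v), v⟫) s := by
    intro s
    have := (((hg (y + s • v)).hasFDerivAt).comp_hasDerivAt s (hline s)).neg
    simpa [InnerProductSpace.toDual_apply_apply, Function.comp_def, Pi.neg_def] using this
  have key := taylor1d_aux (fun u => -φ (y + u • v)) (fun s => -⟪g (y + s • v), v⟫) hd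
      (-(m * ‖v‖ ^ 2)) ?_
  · simp only [zero_smul, add_zero, one_smul] at key
    linarith
  · intro s hs
    simp only [zero_smul, add_zero]
    have hkey : m * s ^ 2 * ‖v‖ ^ 2 ≤ s * ⟪g (y + s • v) - g y, v⟫ := by
      have := hsc (y + s • v) y
      have he : (y + s • v) - y = s • v := by abel
      rw [he] at this
      calc m * s ^ 2 * ‖v‖ ^ 2 = m * ‖s • v‖ ^ 2 := by
            rw [norm_smul, Real.norm_eq_abs, mul_pow, sq_abs]; ring
        _ ≤ ⟪g (y + s • v) - g y, s • v⟫ := this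
        _ = s * ⟪g (y + s • v) - g y, v⟫ := real_inner_smul_right _ _ _
    have h1 : ⟪g (y + s • v), v⟫ - ⟪g y, v⟫ = ⟪g (y + s • v) - g y, v⟫ := by
      rw [inner_sub_left]
    rcases hs.1.eq_or_lt with h0 | h0
    · subst h0; simp
    · have : m * s * ‖v‖ ^ 2 ≤ ⟪g (y + s • v) - g y, v⟫ := by
        rw [← mul_le_mul_iff_right₀ h0]
        nlinarith [hkey]
      linarith

/-- Time-Lipschitz bound from a bounded derivative. -/
lemma timeLip_aux (F Ft : ℝ → ℝ) (K δ t : ℝ) (ht : 0 ≤ t) (hδ : 0 < δ)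
    (hd : ∀ u : ℝ, 0 ≤ u → HasDerivAt F (Ft u) u)
    (hb : ∀ u : ℝ, 0 ≤ u → |Ft u| ≤ K) :
    |F (t + δ) - F t| ≤ K * δ := by
  have key : ‖F (t + δ) - F t‖ ≤ K * ‖(t + δ) - t‖ :=
    Convex.norm_image_sub_le_of_norm_hasDerivWithin_le (𝕜 := ℝ) (s := Set.Icc t (t + δ))
      (f' := Ft)
      (fun u hu => (hd u (le_trans ht hu.1)).hasDerivWithinAt)
      (fun u hu => by rw [Real.norm_eq_abs]; exact hb u (le_trans ht hu.1))
      (convex_Icc _ _) (Set.left_mem_Icc.2 (by linarith)) (Set.right_mem_Icc.2 (by linarith))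
  rw [Real.norm_eq_abs, Real.norm_eq_abs] at key
  have he : t + δ - t = δ := by ring
  rw [he, abs_of_pos hδ] at key
  exact key

set_option maxHeartbeats 1000000 in
/-- Remark 1, ultimate tracking bound of Algorithm 1: along the
iterates of Algorithm 1 with `0 < α ≤ 1/(2M)`,
`limsup_{k→∞} (f(x_k,t_k) − f*(t_k)) ≤ ψ/(4κ²α²m) + max(γδ², μδ)/(4κ²α²m²)`;
in particular `(1 − 2καm)^k → 0`, so the initialization error vanishes. -/
theorem alg1_ultimate_tracking_bound
    {E : Type*} [NormedAddCommGroup E] [InnerProductSpace ℝ E] [CompleteSpace E]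
    (f : E → ℝ → ℝ) (gx : E → ℝ → E) (ft : E → ℝ → ℝ)
    (fxt : E → ℝ → E) (ftt : E → ℝ → ℝ) (xstar : ℝ → E)
    (m M K1 K2 K3 : ℝ) (hm : 0 < m) (hmM : m ≤ M)
    (hgrad : ∀ (x : E) (t : ℝ), 0 ≤ t → HasGradientAt (fun y => f y t) (gx x t) x)
    (hft : ∀ (x : E) (t : ℝ), 0 ≤ t → HasDerivAt (fun s => f x s) (ft x t) t)
    (hfxt : ∀ (x : E) (t : ℝ), 0 ≤ t → HasDerivAt (fun s => gx x s) (fxt x t) t)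
    (hftt : ∀ (x : E) (t : ℝ), 0 ≤ t → HasDerivAt (fun s => ft x s) (ftt x t) t)
    (hsc : ∀ (t : ℝ), 0 ≤ t → ∀ x y : E, m * ‖x - y‖ ^ 2 ≤ ⟪gx x t - gx y t, x - y⟫)
    (hLip : ∀ (t : ℝ), 0 ≤ t → ∀ x y : E, ‖gx x t - gx y t‖ ≤ M * ‖x - y‖)
    (hK1 : ∀ (x : E) (t : ℝ), 0 ≤ t → |ft x t| ≤ K1)
    (hK2 : ∀ (x : E) (t : ℝ), 0 ≤ t → ‖fxt x t‖ ≤ K2)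
    (hK3 : ∀ (x : E) (t : ℝ), 0 ≤ t → |ftt x t| ≤ K3)
    (hmin : ∀ (t : ℝ), 0 ≤ t → IsMinOn (fun y => f y t) Set.univ (xstar t))
    (t0 δ ε α : ℝ) (ht0 : 0 ≤ t0) (hδ : 0 < δ) (hε : 0 < ε)
    (hα : 0 < α) (hαM : α ≤ 1 / (2 * M))
    (tseq : ℕ → ℝ) (htseq : ∀ k : ℕ, tseq k = t0 + (k : ℝ) * δ)
    (x xminus : ℕ → E)
    (hpred : ∀ k : ℕ, xminus (k + 1) =
      if ε ≤ ‖gx (x k) (tseq k)‖ then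
        x k - (δ * |ft (x k) (tseq k)| / ‖gx (x k) (tseq k)‖ ^ 2) • gx (x k) (tseq k)
      else x k)
    (hupd : ∀ k : ℕ, x (k + 1) = xminus (k + 1) - α • gx (xminus (k + 1)) (tseq (k + 1)))
    (κ γ μ ψ : ℝ)
    (hκ : κ = 1 - α * M / 2)
    (hγ : γ = 2 * K1 / δ + M / (2 * ε ^ 2) * K1 ^ 2 + K3 / 2 + K1 * K2 / ε)
    (hμ : μ = K1 + δ / 2 * K3)
    (hψ : ψ = δ * (K1 + δ / 2 * K3) + K2 ^ 2 * δ ^ 2 / (2 * m) * (M * δ / m + 2)) :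
    limsup (fun k : ℕ => f (x k) (tseq k) - f (xstar (tseq k)) (tseq k)) atTop ≤
        ψ / (4 * κ ^ 2 * α ^ 2 * m) + max (γ * δ ^ 2) (μ * δ) / (4 * κ ^ 2 * α ^ 2 * m ^ 2) ∧
      Tendsto (fun k : ℕ => (1 - 2 * κ * α * m) ^ k) atTop (nhds 0) := by
  have hM : 0 < M := lt_of_lt_of_le hm hmM
  have hK1' : 0 ≤ K1 := le_trans (abs_nonneg _) (hK1 (xstar t0) t0 ht0)
  have hK2' : 0 ≤ K2 := le_trans (norm_nonneg _) (hK2 (xstar t0) t0 ht0)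
  have hK3' : 0 ≤ K3 := le_trans (abs_nonneg _) (hK3 (xstar t0) t0 ht0)
  have hαM2 : α * M ≤ 1 / 2 := by
    have h2M : 0 < 2 * M := by linarith
    rw [le_div_iff₀ h2M] at hαM; linarith
  have hκpos : 0 < κ := by rw [hκ]; linarith
  have hκlt : κ < 1 := by rw [hκ]; nlinarith [mul_pos hα hM]
  have hαm2 : 2 * α * m ≤ 1 := by nlinarith [mul_le_mul_of_nonneg_left hmM hα.le]
  have hc : 0 < 2 * κ * α * m := by positivity
  have hc1 : 2 * κ * α * m < 1 := by nlinarith [mul_pos hα hm]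
  have hρ0 : 0 ≤ 1 - 2 * κ * α * m := by linarith
  have hρ1 : 1 - 2 * κ * α * m < 1 := by linarith
  have hρle1 : 1 - 2 * κ * α * m ≤ 1 := by linarith
  have htpos : ∀ k : ℕ, 0 ≤ tseq k := fun k => by
    rw [htseq]; exact add_nonneg ht0 (mul_nonneg (Nat.cast_nonneg k) hδ.le)
  have htsucc : ∀ k : ℕ, tseq (k + 1) = tseq k + δ := by
    intro k; rw [htseq, htseq]; push_cast; ring
  -- quadratic bounds
  have upper : ∀ t, 0 ≤ t → ∀ y v : E,
      f (y + v) t ≤ f y t + ⟪gx y t, v⟫ + M / 2 * ‖v‖ ^ 2 := fun t ht y v =>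
    quad_upper_aux (fun z => f z t) (fun z => gx z t) M (fun z => hgrad z t ht)
      (fun a b => hLip t ht a b) y v
  have lower : ∀ t, 0 ≤ t → ∀ y v : E,
      f y t + ⟪gx y t, v⟫ + m / 2 * ‖v‖ ^ 2 ≤ f (y + v) t := fun t ht y v =>
    quad_lower_aux (fun z => f z t) (fun z => gx z t) m (fun z => hgrad z t ht)
      (fun a b => hsc t ht a b) y v
  have hminle : ∀ t, 0 ≤ t → ∀ y : E, f (xstar t) t ≤ f y t := fun t ht y =>
    isMinOn_iff.mp (hmin t ht) y (Set.mem_univ y)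
  -- PL inequality
  have hPL : ∀ t, 0 ≤ t → ∀ y : E,
      2 * m * (f y t - f (xstar t) t) ≤ ‖gx y t‖ ^ 2 := by
    intro t ht y
    have hl := lower t ht y (xstar t - y)
    have he : y + (xstar t - y) = xstar t := by abel
    rw [he] at hl
    have hip := abs_le.1 (abs_real_inner_le_norm (gx y t) (xstar t - y))
    nlinarith [sq_nonneg (‖gx y t‖ - m * ‖xstar t - y‖), hip.1]
  -- time Lipschitz
  have timeLip : ∀ (z : E) (t : ℝ), 0 ≤ t → |f z (t + δ) - f z t| ≤ K1 * δ := by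
    intro z t ht
    exact timeLip_aux (fun s => f z s) (fun s => ft z s) K1 δ t ht hδ
      (fun u hu => hft z u hu) (fun u hu => hK1 z u hu)
  -- Step A : prediction step does not increase the cost too much
  have stepA : ∀ k : ℕ, f (xminus (k + 1)) (tseq k) ≤
      f (x k) (tseq k) + M * δ ^ 2 * K1 ^ 2 / (2 * ε ^ 2) := by
    intro k
    have ht := htpos k
    have hnn : 0 ≤ M * δ ^ 2 * K1 ^ 2 / (2 * ε ^ 2) :=
      div_nonneg (mul_nonneg (mul_nonneg hM.le (sq_nonneg δ)) (sq_nonneg K1)) (by positivity)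
    rw [hpred k]
    by_cases hif : ε ≤ ‖gx (x k) (tseq k)‖
    · rw [if_pos hif]
      set g1 := gx (x k) (tseq k) with hg1
      set s := δ * |ft (x k) (tseq k)| / ‖g1‖ ^ 2 with hs
      have hgpos : 0 < ‖g1‖ := lt_of_lt_of_le hε hif
      have hg2 : (0:ℝ) < ‖g1‖ ^ 2 := by positivity
      have hs0 : 0 ≤ s := div_nonneg (mul_nonneg hδ.le (abs_nonneg _)) hg2.le
      have hu := upper (tseq k) ht (x k) (-(s • g1))
      rw [← sub_eq_add_neg] at hu
      have hin : ⟪g1, -(s • g1)⟫ = -(s * ‖g1‖ ^ 2) := by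
        rw [inner_neg_right, real_inner_smul_right, real_inner_self_eq_norm_sq]
      have hnr : ‖-(s • g1)‖ ^ 2 = s ^ 2 * ‖g1‖ ^ 2 := by
        rw [norm_neg, norm_smul, Real.norm_eq_abs, mul_pow, sq_abs]
      rw [hin, hnr] at hu
      have hsg : s * ‖g1‖ ^ 2 = δ * |ft (x k) (tseq k)| := div_mul_cancel₀ _ hg2.ne'
      have hft1 : |ft (x k) (tseq k)| ≤ K1 := hK1 _ _ ht
      have hε2 : ε ^ 2 ≤ ‖g1‖ ^ 2 := by nlinarith
      have hsle : s ≤ δ * K1 / ε ^ 2 :=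
        div_le_div₀ (mul_nonneg hδ.le hK1') (mul_le_mul_of_nonneg_left hft1 hδ.le)
          (by positivity) hε2
      have hs2 : s ^ 2 * ‖g1‖ ^ 2 ≤ δ * K1 / ε ^ 2 * (δ * K1) := by
        have he : s ^ 2 * ‖g1‖ ^ 2 = s * (s * ‖g1‖ ^ 2) := by ring
        rw [he, hsg]
        exact mul_le_mul hsle (mul_le_mul_of_nonneg_left hft1 hδ.le)
          (mul_nonneg hδ.le (abs_nonneg _))
          (div_nonneg (mul_nonneg hδ.le hK1') (sq_nonneg ε))
      have hterm : M / 2 * (s ^ 2 * ‖g1‖ ^ 2) ≤ M * δ ^ 2 * K1 ^ 2 / (2 * ε ^ 2) := by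
        have h2 : δ * K1 / ε ^ 2 * (δ * K1) = δ ^ 2 * K1 ^ 2 / ε ^ 2 := by
          field_simp
        calc M / 2 * (s ^ 2 * ‖g1‖ ^ 2) ≤ M / 2 * (δ ^ 2 * K1 ^ 2 / ε ^ 2) := by
              apply mul_le_mul_of_nonneg_left _ (by linarith)
              rw [← h2]; exact hs2
          _ = M * δ ^ 2 * K1 ^ 2 / (2 * ε ^ 2) := by ring
      have hneg : -(s * ‖g1‖ ^ 2) ≤ 0 := by
        rw [hsg]; exact neg_nonpos.2 (mul_nonneg hδ.le (abs_nonneg _))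
      linarith
    · rw [if_neg hif]; linarith
  -- Step D : correction step contracts
  have stepD : ∀ k : ℕ,
      f (x (k + 1)) (tseq (k + 1)) - f (xstar (tseq (k + 1))) (tseq (k + 1)) ≤
        (1 - 2 * κ * α * m) *
          (f (xminus (k + 1)) (tseq (k + 1)) - f (xstar (tseq (k + 1))) (tseq (k + 1))) := by
    intro k
    have ht' := htpos (k + 1)
    set y := xminus (k + 1) with hy
    set t' := tseq (k + 1) with ht'd
    set g2 := gx y t' with hg2
    have hu := upper t' ht' y (-(α • g2))
    have hx1 : x (k + 1) = y + -(α • g2) := by rw [hupd k, ← sub_eq_add_neg]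
    rw [← hx1] at hu
    have hin : ⟪g2, -(α • g2)⟫ = -(α * ‖g2‖ ^ 2) := by
      rw [inner_neg_right, real_inner_smul_right, real_inner_self_eq_norm_sq]
    have hnr : ‖-(α • g2)‖ ^ 2 = α ^ 2 * ‖g2‖ ^ 2 := by
      rw [norm_neg, norm_smul, Real.norm_eq_abs, mul_pow, sq_abs]
    rw [hin, hnr] at hu
    have hpl := hPL t' ht' y
    have hκα : 0 ≤ α * κ := mul_nonneg hα.le hκpos.le
    have hmul := mul_le_mul_of_nonneg_left hpl hκα
    have hid : -(α * ‖g2‖ ^ 2) + M / 2 * (α ^ 2 * ‖g2‖ ^ 2) = -(α * κ) * ‖g2‖ ^ 2 := by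
      rw [hκ]; ring
    nlinarith [hu, hmul, hid]
  -- nonnegativity of constants
  have hγ0 : 0 ≤ γ := by
    rw [hγ]
    have t1 : 0 ≤ 2 * K1 / δ := div_nonneg (by linarith) hδ.le
    have t2 : 0 ≤ M / (2 * ε ^ 2) * K1 ^ 2 :=
      mul_nonneg (div_nonneg hM.le (by positivity)) (sq_nonneg K1)
    have t4 : 0 ≤ K1 * K2 / ε := div_nonneg (mul_nonneg hK1' hK2') hε.le
    linarith
  have hγδ : 0 ≤ γ * δ ^ 2 := mul_nonneg hγ0 (sq_nonneg δ)
  -- combined one-step bound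
  have hmono : ∀ k : ℕ,
      f (xminus (k + 1)) (tseq (k + 1)) - f (xstar (tseq (k + 1))) (tseq (k + 1)) ≤
        (f (x k) (tseq k) - f (xstar (tseq k)) (tseq k)) + γ * δ ^ 2 := by
    intro k
    have ht := htpos k
    have htl1 := timeLip (xminus (k + 1)) (tseq k) ht
    have htl2 := timeLip (xstar (tseq (k + 1))) (tseq k) ht
    rw [← htsucc k] at htl1 htl2
    have e1 := (abs_le.1 htl1).2
    have e2 := (abs_le.1 htl2).1
    have hA := stepA k
    have hm1 := hminle (tseq k) ht (xstar (tseq (k + 1)))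
    have hγid : γ * δ ^ 2 =
        2 * K1 * δ + M * δ ^ 2 * K1 ^ 2 / (2 * ε ^ 2) + K3 / 2 * δ ^ 2 + K1 * K2 / ε * δ ^ 2 := by
      rw [hγ]; field_simp
    have hpos1 : 0 ≤ K3 / 2 * δ ^ 2 := mul_nonneg (by linarith) (sq_nonneg δ)
    have hpos2 : 0 ≤ K1 * K2 / ε * δ ^ 2 :=
      mul_nonneg (div_nonneg (mul_nonneg hK1' hK2') hε.le) (sq_nonneg δ)
    linarith
  have key : ∀ k : ℕ,
      f (x (k + 1)) (tseq (k + 1)) - f (xstar (tseq (k + 1))) (tseq (k + 1)) ≤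
        (1 - 2 * κ * α * m) * (f (x k) (tseq k) - f (xstar (tseq k)) (tseq k)) + γ * δ ^ 2 := by
    intro k
    have hD := stepD k
    have hH := mul_le_mul_of_nonneg_left (hmono k) hρ0
    nlinarith [hγδ, hc]
  have hpos : ∀ k : ℕ, 0 ≤ f (x k) (tseq k) - f (xstar (tseq k)) (tseq k) := fun k =>
    sub_nonneg.2 (hminle _ (htpos k) _)
  set S : ℝ := γ * δ ^ 2 / (2 * κ * α * m) with hSdef
  have hS0 : 0 ≤ S := div_nonneg hγδ hc.le
  have bound : ∀ k : ℕ, f (x k) (tseq k) - f (xstar (tseq k)) (tseq k) ≤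
      (1 - 2 * κ * α * m) ^ k * (f (x 0) (tseq 0) - f (xstar (tseq 0)) (tseq 0)) + S := by
    intro k
    induction k with
    | zero => simp; linarith [hS0]
    | succ n ih =>
      have e1 := key n
      have e2 := mul_le_mul_of_nonneg_left ih hρ0
      have e3 : (1 - 2 * κ * α * m) *
          ((1 - 2 * κ * α * m) ^ n * (f (x 0) (tseq 0) - f (xstar (tseq 0)) (tseq 0)) + S) =
          (1 - 2 * κ * α * m) ^ (n + 1) * (f (x 0) (tseq 0) - f (xstar (tseq 0)) (tseq 0)) +
            (1 - 2 * κ * α * m) * S := by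
        rw [pow_succ]; ring
      have e4 : (1 - 2 * κ * α * m) * S + γ * δ ^ 2 = S := by
        rw [hSdef]; field_simp; ring
      linarith
  have htendpow : Tendsto (fun k : ℕ => (1 - 2 * κ * α * m) ^ k) atTop (nhds 0) :=
    tendsto_pow_atTop_nhds_zero_of_lt_one hρ0 hρ1
  refine ⟨?_, htendpow⟩
  have htend : Tendsto (fun k : ℕ =>
      (1 - 2 * κ * α * m) ^ k * (f (x 0) (tseq 0) - f (xstar (tseq 0)) (tseq 0)) + S)
      atTop (nhds S) := by
    have := (htendpow.mul_const (f (x 0) (tseq 0) - f (xstar (tseq 0)) (tseq 0))).add_const S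
    simpa using this
  have h1 := limsup_le_limsup (Eventually.of_forall bound)
    (isCoboundedUnder_le_of_le atTop hpos) htend.isBoundedUnder_le
  rw [htend.limsup_eq] at h1
  refine h1.trans ?_
  have hψ0 : 0 ≤ ψ := by
    rw [hψ]
    have t1 : 0 ≤ δ * (K1 + δ / 2 * K3) :=
      mul_nonneg hδ.le (add_nonneg hK1' (mul_nonneg (by linarith) hK3'))
    have t2 : 0 ≤ K2 ^ 2 * δ ^ 2 / (2 * m) * (M * δ / m + 2) :=
      mul_nonneg (div_nonneg (mul_nonneg (sq_nonneg K2) (sq_nonneg δ)) (by linarith))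
        (add_nonneg (div_nonneg (mul_nonneg hM.le hδ.le) hm.le) (by norm_num))
    linarith
  have hψterm : 0 ≤ ψ / (4 * κ ^ 2 * α ^ 2 * m) := by
    apply div_nonneg hψ0
    positivity
  have hmax : γ * δ ^ 2 ≤ max (γ * δ ^ 2) (μ * δ) := le_max_left _ _
  have hSB : S ≤ max (γ * δ ^ 2) (μ * δ) / (4 * κ ^ 2 * α ^ 2 * m ^ 2) := by
    rw [hSdef, div_le_div_iff₀ hc (by positivity)]
    have b1 : γ * δ ^ 2 * (2 * κ * α * m) ≤ γ * δ ^ 2 :=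
      mul_le_of_le_one_right hγδ hc1.le
    have b2 : γ * δ ^ 2 * (2 * κ * α * m) * (2 * κ * α * m) ≤ γ * δ ^ 2 * (2 * κ * α * m) :=
      mul_le_mul_of_nonneg_right b1 hc.le
    have b3 : γ * δ ^ 2 * (2 * κ * α * m) ≤ max (γ * δ ^ 2) (μ * δ) * (2 * κ * α * m) :=
      mul_le_mul_of_nonneg_right hmax hc.le
    nlinarith
  linarith
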